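/- Let P be the transition kernel of the simple random walk on the Cayley graph of a finitely generated group Γ with symmetric generating set S, and suppose Ψ : Γ → H is a Γ-equivariant P-harmonic map into a Hilbert space, normalized so that (1/|S|) ∑_{s∈S} ‖Ψ(e) − Ψ(s)‖² = 1. Then for the random walk {X_t}, E[‖Ψ(X_0) − Ψ(X_t)‖²] = t, and consequently E[dist(X_0, X_t)²] ≥ t/|S|. -/

import Mathlib

open Finset

/-- Word metric with respect to a generating set `S`: the least length of a word over `S`
expressing `g⁻¹ * h`. -/
noncomputable def wordDist {Γ : Type*} [Group Γ] (S : Finset Γ) (g h : Γ) : ℕ :=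
  sInf {n : ℕ | ∃ w : Fin n → Γ, (∀ i, w i ∈ S) ∧ h = g * (List.ofFn w).prod}

theorem stmt15 {Γ : Type*} [Group Γ] [DecidableEq Γ]
    (S : Finset Γ) (hS0 : S.Nonempty) (hSsymm : ∀ s ∈ S, s⁻¹ ∈ S)
    (hSgen : Subgroup.closure (S : Set Γ) = ⊤)
    {H : Type*} [NormedAddCommGroup H] [InnerProductSpace ℝ H] [CompleteSpace H]
    (Ψ : Γ → H)
    (π : Γ →* (H ≃ᵢ H))
    (hequiv : ∀ g h : Γ, π g (Ψ h) = Ψ (g * h))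
    (hharm : ∀ h : Γ, Ψ h = ((S.card : ℝ))⁻¹ • ∑ s ∈ S, Ψ (h * s))
    (hnorm : ((S.card : ℝ))⁻¹ * ∑ s ∈ S, ‖Ψ 1 - Ψ s‖ ^ 2 = 1) :
    ∀ t : ℕ,
      (((S.card : ℝ) ^ t)⁻¹ *
          ∑ w : Fin t → S, ‖Ψ 1 - Ψ ((List.ofFn fun i => (w i : Γ)).prod)‖ ^ 2 = t) ∧
      (t : ℝ) / S.card ≤
        ((S.card : ℝ) ^ t)⁻¹ *
          ∑ w : Fin t → S,
            (wordDist S 1 ((List.ofFn fun i => (w i : Γ)).prod) : ℝ) ^ 2 := by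
  have hcard : (0:ℝ) < S.card := by exact_mod_cast hS0.card_pos
  have hcard' : (S.card : ℝ) ≠ 0 := ne_of_gt hcard
  -- isometry lemma
  have hiso : ∀ g h : Γ, ‖Ψ g - Ψ (g * h)‖ = ‖Ψ 1 - Ψ h‖ := by
    intro g h
    have h1 : Ψ g = π g (Ψ 1) := by rw [hequiv g 1, mul_one]
    have h2 : Ψ (g * h) = π g (Ψ h) := (hequiv g h).symm
    rw [h1, h2, ← dist_eq_norm, (π g).isometry.dist_eq, dist_eq_norm]
  have hsumnorm : ∑ s ∈ S, ‖Ψ 1 - Ψ s‖ ^ 2 = (S.card : ℝ) := by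
    field_simp at hnorm
    linarith [hnorm]
  -- key increment identity
  have key : ∀ g : Γ, ∑ s ∈ S, ‖Ψ 1 - Ψ (g * s)‖ ^ 2
      = S.card * ‖Ψ 1 - Ψ g‖ ^ 2 + S.card := by
    intro g
    have hsum0 : ∑ s ∈ S, (Ψ g - Ψ (g * s)) = 0 := by
      rw [Finset.sum_sub_distrib, Finset.sum_const, sub_eq_zero]
      have h1 : (S.card : ℝ) • Ψ g = ∑ s ∈ S, Ψ (g * s) := by
        rw [hharm g, smul_inv_smul₀ hcard']
      rw [← h1, Nat.cast_smul_eq_nsmul ℝ]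
    have expand : ∀ s ∈ S, ‖Ψ 1 - Ψ (g * s)‖ ^ 2
        = ‖Ψ 1 - Ψ g‖ ^ 2 + 2 * (inner ℝ (Ψ 1 - Ψ g) (Ψ g - Ψ (g * s)) : ℝ)
          + ‖Ψ 1 - Ψ s‖ ^ 2 := by
      intro s _
      have : Ψ 1 - Ψ (g * s) = (Ψ 1 - Ψ g) + (Ψ g - Ψ (g * s)) := by abel
      rw [this, norm_add_sq_real, hiso g s]
    rw [Finset.sum_congr rfl expand]
    rw [Finset.sum_add_distrib, Finset.sum_add_distrib, Finset.sum_const,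
      ← Finset.mul_sum, ← inner_sum, hsum0, inner_zero_right, hsumnorm]
    push_cast
    ring
  -- main identity
  have main : ∀ t : ℕ,
      ∑ w : Fin t → S, ‖Ψ 1 - Ψ ((List.ofFn fun i => (w i : Γ)).prod)‖ ^ 2
        = t * (S.card : ℝ) ^ t := by
    intro t
    induction t with
    | zero => simp
    | succ t ih =>
      rw [← Equiv.sum_comp (Fin.snocEquiv (fun _ => S))
        (fun w => ‖Ψ 1 - Ψ ((List.ofFn fun i => (w i : Γ)).prod)‖ ^ 2)]
      rw [Fintype.sum_prod_type]
      have hre : ∀ (s : S) (v : Fin t → S),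
          (List.ofFn fun i => ((Fin.snocEquiv (fun _ => S) (s, v) i : Γ))).prod
            = (List.ofFn fun i => (v i : Γ)).prod * (s : Γ) := by
        intro s v
        rw [List.ofFn_succ']
        simp [Fin.snocEquiv, Fin.snoc_castSucc, Fin.snoc_last]
      have : ∀ s : S, ∑ v : Fin t → S,
          ‖Ψ 1 - Ψ ((List.ofFn fun i => ((Fin.snocEquiv (fun _ => S) (s, v) i : Γ))).prod)‖ ^ 2
          = ∑ v : Fin t → S,
            ‖Ψ 1 - Ψ ((List.ofFn fun i => (v i : Γ)).prod * (s : Γ))‖ ^ 2 := by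
        intro s
        exact Finset.sum_congr rfl fun v _ => by rw [hre s v]
      rw [Finset.sum_congr rfl fun s _ => this s]
      rw [Finset.sum_comm]
      have h2 : ∀ v : Fin t → S,
          ∑ s : S, ‖Ψ 1 - Ψ ((List.ofFn fun i => (v i : Γ)).prod * (s : Γ))‖ ^ 2
          = S.card * ‖Ψ 1 - Ψ ((List.ofFn fun i => (v i : Γ)).prod)‖ ^ 2 + S.card := by
        intro v
        rw [← key ((List.ofFn fun i => (v i : Γ)).prod)]
        exact Finset.sum_coe_sort S (fun s => ‖Ψ 1 - Ψ ((List.ofFn fun i => (v i : Γ)).prod * s)‖ ^ 2)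
      rw [Finset.sum_congr rfl fun v _ => h2 v]
      rw [Finset.sum_add_distrib, ← Finset.mul_sum, ih, Finset.sum_const]
      have hcardfun : (Finset.univ : Finset (Fin t → S)).card = S.card ^ t := by
        simp [Finset.card_univ, Fintype.card_coe]
      rw [hcardfun]
      push_cast
      ring
  -- Lipschitz bound
  have hstep : ∀ s ∈ S, ‖Ψ 1 - Ψ s‖ ≤ Real.sqrt S.card := by
    intro s hs
    have h1 : ‖Ψ 1 - Ψ s‖ ^ 2 ≤ (S.card : ℝ) := by
      rw [← hsumnorm]
      exact Finset.single_le_sum (f := fun s => ‖Ψ 1 - Ψ s‖ ^ 2) (fun i _ => by positivity) hs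
    have := Real.sqrt_le_sqrt h1
    rwa [Real.sqrt_sq (norm_nonneg _)] at this
  have lip : ∀ (n : ℕ) (w : Fin n → Γ), (∀ i, w i ∈ S) →
      ‖Ψ 1 - Ψ (List.ofFn w).prod‖ ≤ n * Real.sqrt S.card := by
    intro n
    induction n with
    | zero => intro w _; simp
    | succ n ih =>
      intro w hw
      rw [List.ofFn_succ, List.prod_cons]
      have h1 : ‖Ψ 1 - Ψ (w 0 * (List.ofFn fun i => w i.succ).prod)‖
          ≤ ‖Ψ 1 - Ψ (w 0)‖ + ‖Ψ (w 0) - Ψ (w 0 * (List.ofFn fun i => w i.succ).prod)‖ := by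
        have : Ψ 1 - Ψ (w 0 * (List.ofFn fun i => w i.succ).prod)
            = (Ψ 1 - Ψ (w 0)) + (Ψ (w 0) - Ψ (w 0 * (List.ofFn fun i => w i.succ).prod)) := by
          abel
        rw [this]; exact norm_add_le _ _
      rw [hiso] at h1
      have h2 := ih (fun i => w i.succ) (fun i => hw i.succ)
      have h3 := hstep (w 0) (hw 0)
      push_cast
      calc ‖Ψ 1 - Ψ (w 0 * (List.ofFn fun i => w i.succ).prod)‖
          ≤ ‖Ψ 1 - Ψ (w 0)‖ + ‖Ψ 1 - Ψ (List.ofFn fun i => w i.succ).prod‖ := h1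
        _ ≤ Real.sqrt S.card + n * Real.sqrt S.card := add_le_add h3 h2
        _ = (n + 1) * Real.sqrt S.card := by ring
  have lip2 : ∀ (t : ℕ) (w : Fin t → S),
      ‖Ψ 1 - Ψ ((List.ofFn fun i => (w i : Γ)).prod)‖ ^ 2
        ≤ S.card * (wordDist S 1 ((List.ofFn fun i => (w i : Γ)).prod) : ℝ) ^ 2 := by
    intro t w
    set g := (List.ofFn fun i => (w i : Γ)).prod with hg
    have hne : {n : ℕ | ∃ v : Fin n → Γ, (∀ i, v i ∈ S) ∧ g = 1 * (List.ofFn v).prod}.Nonempty := by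
      exact ⟨t, fun i => (w i : Γ), fun i => (w i).2, by rw [one_mul]⟩
    obtain ⟨v, hv, hgv⟩ := Nat.sInf_mem hne
    rw [one_mul] at hgv
    have h1 : ‖Ψ 1 - Ψ g‖ ≤ (wordDist S 1 g : ℝ) * Real.sqrt S.card := by
      unfold wordDist
      have := lip _ v hv
      rw [← hgv] at this
      exact this
    have h2 : ‖Ψ 1 - Ψ g‖ ^ 2 ≤ ((wordDist S 1 g : ℝ) * Real.sqrt S.card) ^ 2 :=
      pow_le_pow_left₀ (norm_nonneg _) h1 2
    calc ‖Ψ 1 - Ψ g‖ ^ 2 ≤ ((wordDist S 1 g : ℝ) * Real.sqrt S.card) ^ 2 := h2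
      _ = S.card * (wordDist S 1 g : ℝ) ^ 2 := by
          rw [mul_pow, Real.sq_sqrt (le_of_lt hcard)]; ring
  intro t
  have hpow : ((S.card : ℝ) ^ t) ≠ 0 := pow_ne_zero t hcard'
  constructor
  · rw [main t, inv_mul_eq_div, mul_div_assoc, div_self hpow, mul_one]
  · rw [div_le_iff₀ hcard]
    have h1 : (t : ℝ) * (S.card : ℝ) ^ t
        ≤ ∑ w : Fin t → S, S.card * (wordDist S 1 ((List.ofFn fun i => (w i : Γ)).prod) : ℝ) ^ 2 := by
      rw [← main t]
      exact Finset.sum_le_sum fun w _ => lip2 t w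
    rw [← Finset.mul_sum] at h1
    rw [mul_comm (((S.card : ℝ) ^ t)⁻¹ * _) _, ← mul_assoc]
    rw [mul_comm (S.card : ℝ) (((S.card : ℝ) ^ t)⁻¹), mul_assoc]
    calc (t : ℝ) = ((S.card : ℝ) ^ t)⁻¹ * ((t : ℝ) * (S.card : ℝ) ^ t) := by
          field_simp
      _ ≤ ((S.card : ℝ) ^ t)⁻¹ * ((S.card : ℝ) * ∑ w : Fin t → S,
            (wordDist S 1 ((List.ofFn fun i => (w i : Γ)).prod) : ℝ) ^ 2) := by
          apply mul_le_mul_of_nonneg_left h1 (inv_nonneg.mpr (pow_nonneg hcard.le t))
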